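/- For each n, let B_1, …, B_n be independent random variables each uniformly distributed on {1, …, n} (n balls thrown independently and uniformly into n bins), and let L_n = max_{j ∈ {1,…,n}} #{i : B_i = j} be the maximum load. Then P(L_n ≥ 3·log n / log log n) → 0 as n → ∞. -/

import Mathlib

open Filter

/-- The maximum load when the balls are placed according to `f : Fin n → Fin n`
(ball `i` goes into bin `f i`). -/
def maxLoad {n : ℕ} (f : Fin n → Fin n) : ℕ :=
  Finset.univ.sup fun j => (Finset.univ.filter fun i => f i = j).card

lemma card_fixed (n : ℕ) (j : Fin n) (S : Finset (Fin n)) :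
    (Finset.univ.filter fun f : Fin n → Fin n => ∀ i ∈ S, f i = j).card
      = n ^ (n - S.card) := by
  rw [← Fintype.card_subtype]
  rw [Fintype.card_congr (Equiv.subtypePiEquivPi (p := fun i (x : Fin n) => i ∈ S → x = j))]
  rw [Fintype.card_pi]
  have h : ∀ i : Fin n, Fintype.card {x : Fin n // i ∈ S → x = j}
      = if i ∈ S then 1 else n := by
    intro i
    by_cases hi : i ∈ S
    · rw [if_pos hi, Fintype.card_eq_one_iff]
      exact ⟨⟨j, fun _ => rfl⟩, fun ⟨x, hx⟩ => Subtype.ext (hx hi)⟩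
    · rw [if_neg hi, Fintype.card_subtype]
      simp [hi]
  simp only [h]
  rw [Finset.prod_ite, Finset.prod_const_one, Finset.prod_const, one_mul]
  congr 1
  simp [Finset.filter_not, Finset.filter_univ_mem, Finset.card_sdiff, Finset.subset_univ]

lemma count_bound (n k : ℕ) (hk : 1 ≤ k) :
    (Finset.univ.filter fun f : Fin n → Fin n => k ≤ maxLoad f).card
      ≤ n * (n.choose k * n ^ (n - k)) := by
  have hsub : (Finset.univ.filter fun f : Fin n → Fin n => k ≤ maxLoad f)
      ⊆ Finset.univ.biUnion (fun j : Fin n =>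
          (Finset.univ.powersetCard k).biUnion fun S =>
            Finset.univ.filter fun f : Fin n → Fin n => ∀ i ∈ S, f i = j) := by
    intro f hf
    simp only [Finset.mem_filter, Finset.mem_univ, true_and] at hf
    rw [maxLoad, Finset.le_sup_iff (by simp only [bot_eq_zero']; omega : (⊥:ℕ) < k)] at hf
    obtain ⟨j, -, hj⟩ := hf
    obtain ⟨S, hS, hScard⟩ := Finset.exists_subset_card_eq hj
    simp only [Finset.mem_biUnion, Finset.mem_univ, true_and]
    refine ⟨j, S, Finset.mem_powersetCard.mpr ⟨Finset.subset_univ S, hScard⟩, ?_⟩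
    simp only [Finset.mem_filter, Finset.mem_univ, true_and]
    exact fun i hi => (Finset.mem_filter.mp (hS hi)).2
  calc (Finset.univ.filter fun f : Fin n → Fin n => k ≤ maxLoad f).card
      ≤ _ := Finset.card_le_card hsub
    _ ≤ ∑ j : Fin n, ((Finset.univ.powersetCard k).biUnion fun S =>
            Finset.univ.filter fun f : Fin n → Fin n => ∀ i ∈ S, f i = j).card :=
        Finset.card_biUnion_le
    _ ≤ ∑ _j : Fin n, (n.choose k * n ^ (n - k)) := by
        refine Finset.sum_le_sum fun j _ => ?_
        calc ((Finset.univ.powersetCard k).biUnion fun S =>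
                Finset.univ.filter fun f : Fin n → Fin n => ∀ i ∈ S, f i = j).card
            ≤ ∑ S ∈ Finset.univ.powersetCard k,
                (Finset.univ.filter fun f : Fin n → Fin n => ∀ i ∈ S, f i = j).card :=
              Finset.card_biUnion_le
          _ = ∑ S ∈ Finset.univ.powersetCard k, n ^ (n - k) := by
              refine Finset.sum_congr rfl fun S hS => ?_
              rw [card_fixed, (Finset.mem_powersetCard.mp hS).2]
          _ = n.choose k * n ^ (n - k) := by
              rw [Finset.sum_const, Finset.card_powersetCard, Finset.card_univ,
                Fintype.card_fin, smul_eq_mul]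
    _ = n * (n.choose k * n ^ (n - k)) := by
        rw [Finset.sum_const, Finset.card_univ, Fintype.card_fin, smul_eq_mul]

/-- Balls-into-bins upper bound: throwing `n` balls independently and uniformly
at random into `n` bins (uniform measure over all `n^n` placements), the
probability that the maximum load is at least `3·log n / log log n` tends to
`0` as `n → ∞`. -/
theorem balls_into_bins_upper :
    Tendsto (fun n : ℕ =>
        ((Finset.univ.filter fun f : Fin n → Fin n =>
            3 * Real.log n / Real.log (Real.log n) ≤ (maxLoad f : ℝ)).card : ℝ)
          / (n : ℝ) ^ n)
      atTop (nhds 0) := by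
  have hlim : Tendsto (fun n : ℕ => (n:ℝ) ^ (-(1/5) : ℝ)) atTop (nhds 0) :=
    (tendsto_rpow_neg_atTop (by norm_num)).comp tendsto_natCast_atTop_atTop
  refine squeeze_zero' (Eventually.of_forall fun n => by positivity) ?_ hlim
  have hLtop : Tendsto (fun n : ℕ => Real.log n) atTop atTop :=
    Real.tendsto_log_atTop.comp tendsto_natCast_atTop_atTop
  have hLLtop : Tendsto (fun n : ℕ => Real.log (Real.log n)) atTop atTop :=
    Real.tendsto_log_atTop.comp hLtop
  have hbound := Real.isLittleO_log_id_atTop.bound (by norm_num : (0:ℝ) < 1/5)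
  have h1 : ∀ᶠ n : ℕ in atTop, 3 ≤ Real.log n := hLtop.eventually_ge_atTop 3
  have h2 : ∀ᶠ n : ℕ in atTop, 1 ≤ Real.log (Real.log n) := hLLtop.eventually_ge_atTop 1
  have h3 : ∀ᶠ n : ℕ in atTop,
      Real.log (Real.log (Real.log n)) ≤ Real.log (Real.log n) / 5 := by
    filter_upwards [hLLtop.eventually hbound, h2] with n hn hn2
    have habs : |Real.log (Real.log (Real.log n))| ≤ 1/5 * |Real.log (Real.log n)| := by
      simpa [Real.norm_eq_abs] using hn
    rw [abs_of_nonneg (by linarith : (0:ℝ) ≤ Real.log (Real.log n))] at habs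
    calc Real.log (Real.log (Real.log n)) ≤ |Real.log (Real.log (Real.log n))| := le_abs_self _
      _ ≤ _ := by linarith
  have h4 : ∀ᶠ n : ℕ in atTop, 3 * Real.log n ≤ n := by
    have hb := Real.isLittleO_log_id_atTop.bound (by norm_num : (0:ℝ) < 1/3)
    filter_upwards [tendsto_natCast_atTop_atTop.eventually hb, h1] with n hn hn1
    have : |Real.log n| ≤ 1/3 * |(n:ℝ)| := by simpa [Real.norm_eq_abs] using hn
    rw [abs_of_nonneg (by linarith), abs_of_nonneg (by positivity)] at this
    linarith
  filter_upwards [h1, h2, h3, h4, eventually_ge_atTop 1] with n hL3 hLL1 hLLL hlogn hn1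
  set L := Real.log n with hLdef
  set LL := Real.log L with hLLdef
  set k := ⌈3 * L / LL⌉₊ with hkdef
  set m := k / 2 with hmdef
  have hLpos : 0 < L := by linarith
  have hLLpos : 0 < LL := by linarith
  have hnpos : (0:ℝ) < n := by exact_mod_cast hn1
  have hkge : 3 * L / LL ≤ (k:ℝ) := Nat.le_ceil _
  have hLLleL : LL ≤ L := by
    have := Real.log_le_sub_one_of_pos hLpos
    linarith
  have hk3 : (3:ℝ) ≤ (k:ℝ) := by
    refine le_trans ?_ hkge
    rw [le_div_iff₀ hLLpos]
    nlinarith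
  have hk3' : 3 ≤ k := by exact_mod_cast hk3
  have hk1 : 1 ≤ k := by omega
  have hkn : k ≤ n := by
    rw [hkdef, Nat.ceil_le]
    calc 3 * L / LL ≤ 3 * L / 1 := by
          apply div_le_div_of_nonneg_left (by positivity) (by norm_num) hLL1
      _ = 3 * L := by ring
      _ ≤ n := hlogn
  -- rewrite the filter
  have hfe : (Finset.univ.filter fun f : Fin n → Fin n =>
        3 * Real.log n / Real.log (Real.log n) ≤ (maxLoad f : ℝ))
      = (Finset.univ.filter fun f : Fin n → Fin n => k ≤ maxLoad f) := by
    ext f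
    simp only [Finset.mem_filter, Finset.mem_univ, true_and, hkdef, Nat.ceil_le]
    exact Iff.rfl
  have hcount : (((Finset.univ.filter fun f : Fin n → Fin n =>
        3 * Real.log n / Real.log (Real.log n) ≤ (maxLoad f : ℝ)).card : ℕ) : ℝ)
      ≤ (n:ℝ) * ((n.choose k : ℝ) * (n:ℝ) ^ (n - k)) := by
    rw [hfe]
    exact_mod_cast count_bound n k hk1
  -- factorial lower bound
  have hmle : m ≤ k := Nat.div_le_self _ _
  have hfacnat : (m + 1) ^ (k - m) ≤ k.factorial := by
    have h := Nat.factorial_mul_pow_le_factorial (m := m) (n := k - m)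
    rw [Nat.add_sub_cancel' hmle] at h
    calc (m + 1) ^ (k - m) ≤ m.factorial * (m + 1) ^ (k - m) :=
          Nat.le_mul_of_pos_left _ m.factorial_pos
      _ ≤ k.factorial := h
  have hbase : (k:ℝ)/2 ≤ ((m + 1 : ℕ):ℝ) := by
    have : k ≤ 2 * m + 1 := by omega
    have : (k:ℝ) ≤ 2 * (m:ℝ) + 1 := by exact_mod_cast this
    push_cast
    linarith
  have hexp2 : (k:ℝ)/2 ≤ ((k - m : ℕ):ℝ) := by
    have : k ≤ 2 * (k - m) := by omega
    have : (k:ℝ) ≤ 2 * ((k - m : ℕ):ℝ) := by exact_mod_cast this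
    linarith
  have hq : 3 * (L / LL) ≤ (k:ℝ) := by rw [← mul_div_assoc]; exact hkge
  have hqpos : 0 ≤ L / LL := by positivity
  have hloghalf : 4/5 * LL ≤ Real.log ((k:ℝ)/2) := by
    have h0 : L / LL ≤ (k:ℝ)/2 := by linarith
    have h0' : Real.log (L / LL) ≤ Real.log ((k:ℝ)/2) :=
      Real.log_le_log (by positivity) h0
    rw [Real.log_div (ne_of_gt hLpos) (ne_of_gt hLLpos)] at h0'
    have : Real.log LL ≤ LL / 5 := hLLL
    rw [← hLLdef] at h0'
    linarith
  have hloghalfpos : 0 ≤ Real.log ((k:ℝ)/2) := by linarith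
  have hprod : 6/5 * L ≤ ((k - m : ℕ):ℝ) * Real.log ((k:ℝ)/2) := by
    have ha : 3 * L / (2 * LL) ≤ ((k - m : ℕ):ℝ) := by
      refine le_trans ?_ hexp2
      rw [div_le_div_iff₀ (by positivity) (by norm_num)]
      calc 3 * L * 2 = (3 * L / LL) * LL * 2 := by field_simp
        _ ≤ (k:ℝ) * LL * 2 := by nlinarith
        _ = (k:ℝ) * (2 * LL) := by ring
    have hmul := mul_le_mul ha hloghalf (by linarith) (by positivity)
    have heq : 3 * L / (2 * LL) * (4/5 * LL) = 6/5 * L := by field_simp; ring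
    linarith [heq ▸ hmul]
  have hhalfpos : (0:ℝ) < (k:ℝ)/2 := by linarith
  have hkfact : (n:ℝ) ^ ((6:ℝ)/5) ≤ (k.factorial : ℝ) := by
    calc (n:ℝ) ^ ((6:ℝ)/5) = Real.exp (6/5 * L) := by
          rw [Real.rpow_def_of_pos hnpos, mul_comm]
      _ ≤ Real.exp (((k - m : ℕ):ℝ) * Real.log ((k:ℝ)/2)) := Real.exp_le_exp.mpr hprod
      _ = ((k:ℝ)/2) ^ (k - m) := by
          rw [← Real.log_pow, Real.exp_log (pow_pos hhalfpos _)]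
      _ ≤ ((m + 1 : ℕ):ℝ) ^ (k - m) := pow_le_pow_left₀ (le_of_lt hhalfpos) hbase _
      _ ≤ (k.factorial : ℝ) := by exact_mod_cast hfacnat
  have hCle : (n.choose k : ℝ) ≤ (n:ℝ)^k / (k.factorial : ℝ) := by
    rw [le_div_iff₀ (by positivity)]
    have : n.choose k * k.factorial ≤ n ^ k := by
      rw [mul_comm, ← Nat.descFactorial_eq_factorial_mul_choose]
      exact Nat.descFactorial_le_pow n k
    exact_mod_cast this
  have hpowsplit : (n:ℝ) ^ n = (n:ℝ)^k * (n:ℝ)^(n - k) := by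
    rw [← pow_add]
    congr 1
    omega
  have hfactpos : (0:ℝ) < (k.factorial : ℝ) := by exact_mod_cast k.factorial_pos
  calc ((Finset.univ.filter fun f : Fin n → Fin n =>
            3 * Real.log n / Real.log (Real.log n) ≤ (maxLoad f : ℝ)).card : ℝ)
          / (n : ℝ) ^ n
      ≤ ((n:ℝ) * ((n.choose k : ℝ) * (n:ℝ) ^ (n - k))) / (n : ℝ) ^ n := by
        apply div_le_div_of_nonneg_right hcount (by positivity)
    _ ≤ ((n:ℝ) * (((n:ℝ)^k / (k.factorial : ℝ)) * (n:ℝ) ^ (n - k))) / (n : ℝ) ^ n := by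
        gcongr
    _ = (n:ℝ) / (k.factorial : ℝ) := by
        rw [hpowsplit]
        field_simp
    _ ≤ (n:ℝ) / (n:ℝ) ^ ((6:ℝ)/5) := by
        apply div_le_div_of_nonneg_left (le_of_lt hnpos) (Real.rpow_pos_of_pos hnpos _) hkfact
    _ = (n:ℝ) ^ (-(1/5) : ℝ) := by
        have hdiv : (n:ℝ) / (n:ℝ) ^ ((6:ℝ)/5) = (n:ℝ) ^ ((1:ℝ) - 6/5) := by
          rw [Real.rpow_sub hnpos, Real.rpow_one]
        rw [hdiv]
        norm_num
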